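/- Let r ≥ 3 and n ≥ 1 be integers and let χ(2, …, 2; n) denote χ evaluated at r copies of 2. If n is even then χ(2, …, 2; n) > 0, and if n is odd then χ(2, …, 2; n) < 0. Equivalently, (−1)ⁿ · χ(2, …, 2; n) > 0 for all r ≥ 3 and n ≥ 1. -/
import Mathlib


/-- `hcomplete k d` is the complete homogeneous symmetric polynomial
`h_k(d₁,…,d_r) = ∑_{i₁+⋯+i_r=k} d₁^{i₁}⋯d_r^{i_r}` evaluated at the tuple `d`. -/
def hcomplete {r : ℕ} (k : ℕ) (d : Fin r → ℤ) : ℤ :=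
  ∑ f ∈ Finset.Nat.antidiagonalTuple r k, ∏ j, d j ^ f j

/-- `chi d n = d₁⋯d_r · ∑_{i=0}^{n} (−1)^{n−i} · binom(n+r+1, i) · h_{n−i}(d₁,…,d_r)`,
which by a theorem of Azuma is the degree of the top Chern class of an `n`-dimensional
smooth complete intersection of hypersurfaces of degrees `d₁,…,d_r` in `ℙ^{n+r}`. -/
def chi {r : ℕ} (d : Fin r → ℤ) (n : ℕ) : ℤ :=
  (∏ j, d j) * ∑ i ∈ Finset.range (n + 1),
    (-1) ^ (n - i) * ((n + r + 1).choose i : ℤ) * hcomplete (n - i) d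


lemma hockey (k n : ℕ) :
    ∑ j ∈ Finset.range (n+1), (j + k - 1).choose j = (n + k).choose n := by
  induction n with
  | zero => simp
  | succ n ih =>
    rw [Finset.sum_range_succ, ih]
    have h1 : n + 1 + k - 1 = n + k := by omega
    have h2 : n + 1 + k = (n + k) + 1 := by omega
    rw [h1, h2, Nat.choose_succ_succ']

lemma length_antidiagonalTuple (k n : ℕ) :
    (List.Nat.antidiagonalTuple k n).length = (n + k - 1).choose n := by
  induction k generalizing n with
  | zero =>
    cases n with
    | zero => rfl
    | succ m => simp [Nat.choose_eq_zero_of_lt]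
  | succ k ih =>
    rw [List.Nat.antidiagonalTuple, List.length_flatMap]
    have h : List.Nat.antidiagonal n = (List.range (n+1)).map fun i => (i, n - i) := rfl
    rw [h, List.map_map]
    simp only [Function.comp_def, List.length_map, ih]
    rw [show (List.map (fun x => (n - x + k - 1).choose (n - x)) (List.range (n + 1))).sum
      = ∑ i ∈ Finset.range (n+1), (n - i + k - 1).choose (n - i) from rfl]
    have h4 := Finset.sum_range_reflect (fun j => (j + k - 1).choose j) (n+1)
    simp only [Nat.add_sub_cancel] at h4
    rw [h4, hockey]
    congr 1

lemma card_antidiagonalTuple (k n : ℕ) :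
    (Finset.Nat.antidiagonalTuple k n).card = (n + k - 1).choose n := by
  rw [← length_antidiagonalTuple]
  rfl

/-- `hcomplete` at all-2's. -/
lemma hcomplete_two (r k : ℕ) :
    hcomplete k (fun _ : Fin r => (2:ℤ)) = 2 ^ k * ((k + r - 1).choose k : ℤ) := by
  unfold hcomplete
  have h : ∀ f ∈ Finset.Nat.antidiagonalTuple r k,
      (∏ j, (2:ℤ) ^ f j) = 2 ^ k := by
    intro f hf
    rw [Finset.prod_pow_eq_pow_sum]
    rw [Finset.Nat.mem_antidiagonalTuple] at hf
    rw [hf]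
  rw [Finset.sum_congr rfl h, Finset.sum_const, card_antidiagonalTuple]
  push_cast
  ring

/-- The auxiliary double sum. -/
def Saux (r N n : ℕ) : ℤ :=
  ∑ i ∈ Finset.range (n+1),
    (-1) ^ (n - i) * (N.choose i : ℤ) * (2 ^ (n - i) * ((n - i + r - 1).choose (n - i) : ℤ))

lemma chi_two_eq (r n : ℕ) :
    chi (fun _ : Fin r => (2:ℤ)) n = 2 ^ r * Saux r (n + r + 1) n := by
  unfold chi Saux
  have h1 : (∏ _j : Fin r, (2:ℤ)) = 2 ^ r := by simp
  rw [h1, Finset.mul_sum, Finset.mul_sum]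
  refine Finset.sum_congr rfl fun i _ => ?_
  rw [hcomplete_two]

lemma SauxL1 (r N n : ℕ) : Saux r (N+1) (n+1) = Saux r N (n+1) + Saux r N n := by
  unfold Saux
  conv_lhs => rw [Finset.sum_range_succ']
  conv_rhs => rw [Finset.sum_range_succ' _ (n+1)]
  have key : ∀ i ∈ Finset.range (n+1),
      (-1:ℤ)^(n+1-(i+1)) * (((N+1).choose (i+1) : ℕ) : ℤ) *
        (2^(n+1-(i+1)) * ((((n+1-(i+1)) + r - 1).choose (n+1-(i+1)) : ℕ) : ℤ))
      = (-1:ℤ)^(n+1-(i+1)) * ((N.choose (i+1) : ℕ) : ℤ) *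
          (2^(n+1-(i+1)) * ((((n+1-(i+1)) + r - 1).choose (n+1-(i+1)) : ℕ) : ℤ))
        + (-1:ℤ)^(n-i) * ((N.choose i : ℕ) : ℤ) *
          (2^(n-i) * ((((n-i) + r - 1).choose (n-i) : ℕ) : ℤ)) := by
    intro i hi
    have hs : n + 1 - (i+1) = n - i := by omega
    rw [hs, Nat.choose_succ_succ' N i]
    push_cast
    ring
  rw [Finset.sum_congr rfl key, Finset.sum_add_distrib]
  simp
  ring

lemma SauxL2 (r N n : ℕ) : Saux (r+1) N (n+1) + 2 * Saux (r+1) N n = Saux r N (n+1) := by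
  have e1 : Saux (r+1) N (n+1) = (∑ i ∈ Finset.range (n+1),
      (-1:ℤ)^(n+1-i) * (N.choose i : ℤ) *
        (2^(n+1-i) * (((n+1-i) + (r+1) - 1).choose (n+1-i) : ℤ))) + (N.choose (n+1) : ℤ) := by
    unfold Saux
    rw [Finset.sum_range_succ]
    simp
  have e2 : Saux r N (n+1) = (∑ i ∈ Finset.range (n+1),
      (-1:ℤ)^(n+1-i) * (N.choose i : ℤ) *
        (2^(n+1-i) * (((n+1-i) + r - 1).choose (n+1-i) : ℤ))) + (N.choose (n+1) : ℤ) := by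
    unfold Saux
    rw [Finset.sum_range_succ]
    simp
  rw [e1, e2]
  unfold Saux
  rw [Finset.mul_sum]
  have key : ∀ i ∈ Finset.range (n+1),
      (-1:ℤ)^(n+1-i) * (N.choose i : ℤ) *
        (2^(n+1-i) * (((n+1-i) + (r+1) - 1).choose (n+1-i) : ℤ))
      + 2 * ((-1:ℤ)^(n-i) * (N.choose i : ℤ) *
        (2^(n-i) * (((n-i) + (r+1) - 1).choose (n-i) : ℤ)))
      = (-1:ℤ)^(n+1-i) * (N.choose i : ℤ) *
        (2^(n+1-i) * (((n+1-i) + r - 1).choose (n+1-i) : ℤ)) := by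
    intro i hi
    rw [Finset.mem_range] at hi
    have hi' : i ≤ n := by omega
    set m := n - i with hm
    have h1 : n + 1 - i = m + 1 := by omega
    have h2 : m + 1 + (r + 1) - 1 = (m + r) + 1 := by omega
    have h3 : m + (r + 1) - 1 = m + r := by omega
    have h4 : m + 1 + r - 1 = m + r := by omega
    rw [h1, h2, h3, h4, Nat.choose_succ_succ' (m + r) m]
    push_cast
    ring
  calc (∑ i ∈ Finset.range (n+1),
      (-1:ℤ)^(n+1-i) * (N.choose i : ℤ) *
        (2^(n+1-i) * (((n+1-i) + (r+1) - 1).choose (n+1-i) : ℤ))) + (N.choose (n+1) : ℤ)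
      + ∑ i ∈ Finset.range (n+1), 2 * ((-1:ℤ)^(n-i) * (N.choose i : ℤ) *
        (2^(n-i) * (((n-i) + (r+1) - 1).choose (n-i) : ℤ)))
      = (∑ i ∈ Finset.range (n+1),
        ((-1:ℤ)^(n+1-i) * (N.choose i : ℤ) *
          (2^(n+1-i) * (((n+1-i) + (r+1) - 1).choose (n+1-i) : ℤ))
        + 2 * ((-1:ℤ)^(n-i) * (N.choose i : ℤ) *
          (2^(n-i) * (((n-i) + (r+1) - 1).choose (n-i) : ℤ))))) + (N.choose (n+1) : ℤ) := by
        rw [Finset.sum_add_distrib]; ring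
    _ = (∑ i ∈ Finset.range (n+1),
        (-1:ℤ)^(n+1-i) * (N.choose i : ℤ) *
          (2^(n+1-i) * (((n+1-i) + r - 1).choose (n+1-i) : ℤ))) + (N.choose (n+1) : ℤ) := by
        rw [Finset.sum_congr rfl key]

def Aaux (r n : ℕ) : ℤ := Saux r (n + r + 1) n

lemma Aaux_rec (r n : ℕ) : Aaux (r+1) (n+1) = Aaux r (n+1) - Aaux (r+1) n := by
  have h1 : Aaux (r+1) (n+1) = Saux (r+1) ((n+r+2)+1) (n+1) := by
    unfold Aaux; congr 1 <;> omega
  have h2 : Aaux r (n+1) = Saux r (n+r+2) (n+1) := by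
    unfold Aaux; congr 1 <;> omega
  have h3 : Aaux (r+1) n = Saux (r+1) (n+r+2) n := by
    unfold Aaux; congr 1 <;> omega
  rw [h1, h2, h3]
  rw [SauxL1]
  have := SauxL2 r (n+r+2) n
  linarith

lemma Aaux_zero (r : ℕ) : Aaux r 0 = 1 := by
  unfold Aaux Saux
  simp

lemma Aaux_zero_r (n : ℕ) : Aaux 0 n = (n + 1 : ℤ) := by
  unfold Aaux Saux
  rw [Finset.sum_range_succ]
  have h : ∀ i ∈ Finset.range n,
      (-1:ℤ)^(n-i) * ((n+0+1).choose i : ℤ) *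
        (2^(n-i) * (((n-i) + 0 - 1).choose (n-i) : ℤ)) = 0 := by
    intro i hi
    rw [Finset.mem_range] at hi
    have : ((n - i + 0 - 1).choose (n - i)) = 0 := by
      apply Nat.choose_eq_zero_of_lt
      omega
    rw [this]
    push_cast
    ring
  rw [Finset.sum_congr rfl h]
  simp [Nat.succ_sub_one, Nat.choose_succ_self_right]

def Daux (r n : ℕ) : ℤ := (-1) ^ n * Aaux r n

lemma Daux_rec (r n : ℕ) : Daux (r+1) (n+1) = Daux r (n+1) + Daux (r+1) n := by
  unfold Daux
  rw [Aaux_rec]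
  rw [pow_succ]
  ring

lemma Daux_zero (r : ℕ) : Daux r 0 = 1 := by
  unfold Daux; rw [Aaux_zero]; ring

lemma Daux_zero_r (n : ℕ) : Daux 0 n = (-1) ^ n * (n + 1 : ℤ) := by
  unfold Daux; rw [Aaux_zero_r]

lemma Daux_one (n : ℕ) : Daux 1 n = (-1) ^ n * ((n / 2 : ℕ) + 1 : ℤ) := by
  induction n with
  | zero => simpa using Daux_zero 1
  | succ n ih =>
    rw [Daux_rec, ih, Daux_zero_r]
    have h : (((n+1) / 2 : ℕ) + 1 : ℤ) = ((n + 1 : ℕ) + 1 : ℤ) - ((n / 2 : ℕ) + 1 : ℤ) := by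
      omega
    rw [h, pow_succ]
    push_cast
    ring

lemma Daux_two (n : ℕ) : Daux 2 n = if Even n then ((n / 2 : ℕ) + 1 : ℤ) else 0 := by
  induction n with
  | zero => simpa using Daux_zero 2
  | succ n ih =>
    rw [Daux_rec, ih, Daux_one]
    by_cases he : Even n
    · have ho : ¬ Even (n+1) := by simp [Nat.even_add_one, he]
      rw [if_pos he, if_neg ho]
      have hmod := Nat.even_iff.mp he
      have h1 : (n+1) / 2 = n / 2 := by omega
      have h2 : ((-1:ℤ)) ^ (n+1) = -1 := by
        rw [pow_succ]
        rw [he.neg_one_pow]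
        ring
      rw [h1, h2]
      ring
    · have ho : Even (n+1) := Nat.even_add_one.mpr he
      rw [if_neg he, if_pos ho]
      rw [ho.neg_one_pow]
      ring

lemma Daux_two_nonneg (n : ℕ) : 0 ≤ Daux 2 n := by
  rw [Daux_two]
  split <;> positivity

lemma Daux_three_pos (n : ℕ) : 1 ≤ Daux 3 n := by
  induction n with
  | zero => rw [Daux_zero]
  | succ n ih =>
    have := Daux_two_nonneg (n+1)
    rw [show (3:ℕ) = 2 + 1 from rfl, Daux_rec]
    linarith

lemma Daux_pos (r n : ℕ) : 1 ≤ Daux (r + 3) n := by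
  induction r generalizing n with
  | zero => exact Daux_three_pos n
  | succ r ih =>
    induction n with
    | zero => rw [Daux_zero]
    | succ n ihn =>
      have h1 := ih (n+1)
      rw [show r + 1 + 3 = (r + 3) + 1 from rfl, Daux_rec]
      rw [show r + 1 + 3 = (r + 3) + 1 from rfl] at ihn
      linarith

/-- For `r ≥ 3` and `n ≥ 1`, with `χ(2,…,2; n)` denoting `χ` at `r` copies of `2`:
if `n` is even then `χ(2,…,2; n) > 0`, if `n` is odd then `χ(2,…,2; n) < 0`;
equivalently `(−1)ⁿ·χ(2,…,2; n) > 0`. -/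
theorem chi_quadrics_sign (r n : ℕ) (hr : 3 ≤ r) (hn : 1 ≤ n) :
    ((Even n → 0 < chi (fun _ : Fin r => (2 : ℤ)) n) ∧
     (Odd n → chi (fun _ : Fin r => (2 : ℤ)) n < 0)) ∧
    0 < (-1) ^ n * chi (fun _ : Fin r => (2 : ℤ)) n := by
  have hkey : 0 < (-1) ^ n * chi (fun _ : Fin r => (2 : ℤ)) n := by
    rw [chi_two_eq]
    obtain ⟨k, rfl⟩ : ∃ k, r = k + 3 := ⟨r - 3, by omega⟩
    have hD := Daux_pos k n
    have : ((-1:ℤ)) ^ n * (2 ^ (k+3) * Saux (k+3) (n + (k+3) + 1) n)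
        = 2 ^ (k+3) * Daux (k+3) n := by
      unfold Daux Aaux
      ring
    rw [this]
    have h2 : (0:ℤ) < 2 ^ (k+3) := by positivity
    nlinarith
  refine ⟨⟨?_, ?_⟩, hkey⟩
  · intro he
    have h1 : ((-1:ℤ)) ^ n = 1 := he.neg_one_pow
    rw [h1, one_mul] at hkey
    exact hkey
  · intro ho
    have h1 : ((-1:ℤ)) ^ n = -1 := ho.neg_one_pow
    rw [h1] at hkey
    linarith
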